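/- Let j ≥ 1, let p ∈ ℝ[x₁,…,x_j] be a nonzero polynomial, and let S ⊆ ℝ^j be a connected set. For r ∈ ℝ^j define ord(p,r) as the minimum k ∈ ℕ such that some iterated formal partial derivative of p of total order k does not vanish at r. If ord(p,r) = ord(p,r') for all r, r' ∈ S (i.e., p is order-invariant on S), then p is sign-invariant over S. -/

import Mathlib

/-- A polynomial `p ∈ ℝ[x₁,…,x_j]` is sign-invariant over a set `S ⊆ ℝ^j` if there is a
fixed relation `∼ ∈ {<,=,>}` such that `p(r) ∼ 0` for all `r ∈ S`. -/
def SignInvariantOn {σ : Type*} (p : MvPolynomial σ ℝ) (S : Set (σ → ℝ)) : Prop :=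
  (∀ r ∈ S, MvPolynomial.eval r p < 0) ∨
    (∀ r ∈ S, MvPolynomial.eval r p = 0) ∨
    (∀ r ∈ S, 0 < MvPolynomial.eval r p)

/-- The order `ord(p,r)` of `p` at `r ∈ ℝ^j`: the minimum `k ∈ ℕ` such that some iterated
formal partial derivative of `p` of total order `k` does not vanish at `r`. -/
noncomputable def ord {j : ℕ} (p : MvPolynomial (Fin j) ℝ) (r : Fin j → ℝ) : ℕ :=
  sInf {k : ℕ | ∃ l : List (Fin j), l.length = k ∧
    MvPolynomial.eval r (l.foldr (fun v q => MvPolynomial.pderiv v q) p) ≠ 0}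

open MvPolynomial

theorem my_coeff_pderiv {σ : Type*} [DecidableEq σ] (i : σ) (p : MvPolynomial σ ℝ) (m : σ →₀ ℕ) :
    coeff m (pderiv i p) = (m i + 1) * coeff (m + Finsupp.single i 1) p := by
  induction p using MvPolynomial.induction_on' with
  | monomial s a =>
    rw [pderiv_monomial, coeff_monomial, coeff_monomial]
    by_cases hs : s = m + Finsupp.single i 1
    · subst hs
      have h1 : m + Finsupp.single i 1 - Finsupp.single i 1 = m := by
        ext j; simp [Finsupp.single_apply]
      simp [h1, Finsupp.single_apply]; ring
    · rw [if_neg hs, mul_zero]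
      by_cases hd : s - Finsupp.single i 1 = m
      · have hsi : s i = 0 := by
          by_contra hne
          apply hs
          ext j
          by_cases hj : j = i
          · subst hj; rw [← hd]; simp [Finsupp.single_apply]; omega
          · rw [← hd]; simp [Finsupp.single_apply, show ¬ i = j from fun h => hj h.symm]
        simp [hd, hsi]
      · simp [hd]
  | add p q hp hq => simp [map_add, coeff_add, hp, hq]; ring

theorem my_const_of_pderiv_zero {σ : Type*} (p : MvPolynomial σ ℝ)
    (h : ∀ i, pderiv i p = 0) : p = C (coeff 0 p) := by
  classical
  ext n
  by_cases hn : n = 0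
  · subst hn; simp
  · rw [coeff_C, if_neg (fun h' => hn h'.symm)]
    obtain ⟨i, hi⟩ : ∃ i, n i ≠ 0 := by
      by_contra hc
      push_neg at hc
      exact hn (Finsupp.ext fun i => hc i)
    have hc := my_coeff_pderiv i p (n - Finsupp.single i 1)
    rw [h i] at hc
    have hkey : n - Finsupp.single i 1 + Finsupp.single i 1 = n := by
      ext j
      by_cases hj : j = i
      · subst hj; simp [Finsupp.single_apply]; omega
      · simp [Finsupp.single_apply, show ¬ i = j from fun h' => hj h'.symm]
    rw [hkey] at hc
    simp only [coeff_zero] at hc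
    exact (mul_eq_zero.mp hc.symm).resolve_left (Nat.cast_add_one_ne_zero _)

theorem my_totalDegree_pderiv_lt {σ : Type*} [DecidableEq σ] (i : σ) (p : MvPolynomial σ ℝ)
    (h : pderiv i p ≠ 0) : (pderiv i p).totalDegree < p.totalDegree := by
  have hpos : 0 < p.totalDegree := by
    obtain ⟨m, hm⟩ := (MvPolynomial.ne_zero_iff.mp h)
    rw [my_coeff_pderiv] at hm
    have hc2 : coeff (m + Finsupp.single i 1) p ≠ 0 := by
      intro h0; rw [h0, mul_zero] at hm; exact hm rfl
    have := MvPolynomial.le_totalDegree (MvPolynomial.mem_support_iff.mpr hc2)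
    have hsum : (m + Finsupp.single i 1).sum (fun _ e => e) = m.sum (fun _ e => e) + 1 := by
      rw [Finsupp.sum_add_index (by simp) (by intros; rfl)]
      simp
    omega
  rw [MvPolynomial.totalDegree, Finset.sup_lt_iff hpos]
  intro m hm
  have hc : coeff m (pderiv i p) ≠ 0 := MvPolynomial.mem_support_iff.mp hm
  rw [my_coeff_pderiv] at hc
  have hc2 : coeff (m + Finsupp.single i 1) p ≠ 0 := by
    intro h0; rw [h0, mul_zero] at hc; exact hc rfl
  have := MvPolynomial.le_totalDegree (MvPolynomial.mem_support_iff.mpr hc2)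
  have hsum : (m + Finsupp.single i 1).sum (fun _ e => e) = m.sum (fun _ e => e) + 1 := by
    rw [Finsupp.sum_add_index (by simp) (by intros; rfl)]
    simp
  omega

theorem exists_deriv_ne {σ : Type*} [DecidableEq σ] (p : MvPolynomial σ ℝ) (hp : p ≠ 0)
    (r : σ → ℝ) :
    ∃ l : List σ, MvPolynomial.eval r (l.foldr (fun v q => MvPolynomial.pderiv v q) p) ≠ 0 := by
  suffices H : ∀ n (p : MvPolynomial σ ℝ), p ≠ 0 → p.totalDegree ≤ n →
      ∃ l : List σ, MvPolynomial.eval r (l.foldr (fun v q => MvPolynomial.pderiv v q) p) ≠ 0 from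
    H p.totalDegree p hp le_rfl
  intro n
  induction n with
  | zero =>
    intro p hp hd
    refine ⟨[], ?_⟩
    by_contra he
    simp only [List.foldr_nil] at he
    obtain ⟨i, hi⟩ : ∃ i, pderiv i p ≠ 0 := by
      by_contra hc
      push_neg at hc
      have hC := my_const_of_pderiv_zero p hc
      rw [hC] at he hp
      rw [eval_C] at he
      rw [he] at hp
      simp at hp
    exact absurd (my_totalDegree_pderiv_lt i p hi) (by omega)
  | succ n IH =>
    intro p hp hd
    by_cases he : MvPolynomial.eval r p = 0
    · obtain ⟨i, hi⟩ : ∃ i, pderiv i p ≠ 0 := by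
        by_contra hc
        push_neg at hc
        have hC := my_const_of_pderiv_zero p hc
        rw [hC] at he hp
        rw [eval_C] at he
        rw [he] at hp
        simp at hp
      have hlt := my_totalDegree_pderiv_lt i p hi
      obtain ⟨l, hl⟩ := IH (pderiv i p) hi (by omega)
      refine ⟨l ++ [i], ?_⟩
      rwa [List.foldr_append]
    · exact ⟨[], he⟩

theorem ord_eq_zero_iff {j : ℕ} (p : MvPolynomial (Fin j) ℝ) (hp : p ≠ 0) (r : Fin j → ℝ) :
    ord p r = 0 ↔ MvPolynomial.eval r p ≠ 0 := by
  have hne : {k : ℕ | ∃ l : List (Fin j), l.length = k ∧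
      MvPolynomial.eval r (l.foldr (fun v q => MvPolynomial.pderiv v q) p) ≠ 0}.Nonempty := by
    obtain ⟨l, hl⟩ := exists_deriv_ne p hp r
    exact ⟨l.length, l, rfl, hl⟩
  rw [ord]
  constructor
  · intro h0
    rcases Nat.sInf_eq_zero.mp h0 with hm | hemp
    · obtain ⟨l, hl0, hl⟩ := hm
      rw [List.length_eq_zero_iff] at hl0
      subst hl0
      exact hl
    · rw [hemp] at hne; exact absurd hne (by simp)
  · intro h
    exact Nat.sInf_eq_zero.mpr (Or.inl ⟨[], rfl, h⟩)

/-- Let `j ≥ 1`, let `p ∈ ℝ[x₁,…,x_j]` be nonzero, and let `S ⊆ ℝ^j`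
be a connected set. If `p` is order-invariant on `S` (i.e. `ord(p,r) = ord(p,r')` for
all `r, r' ∈ S`), then `p` is sign-invariant over `S`. -/
theorem stmt_5 (j : ℕ) (hj : 1 ≤ j)
    (p : MvPolynomial (Fin j) ℝ) (hp : p ≠ 0)
    (S : Set (Fin j → ℝ)) (hS : IsConnected S)
    (hord : ∀ r ∈ S, ∀ r' ∈ S, ord p r = ord p r') :
    SignInvariantOn p S := by
  obtain ⟨r₀, hr₀⟩ := hS.nonempty
  by_cases h0 : MvPolynomial.eval r₀ p = 0
  · refine Or.inr (Or.inl fun r hr => ?_)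
    by_contra hne
    have := (ord_eq_zero_iff p hp r).mpr hne
    rw [hord r hr r₀ hr₀] at this
    exact ((ord_eq_zero_iff p hp r₀).mp this) h0
  · have hallne : ∀ r ∈ S, MvPolynomial.eval r p ≠ 0 := by
      intro r hr
      have h := (ord_eq_zero_iff p hp r₀).mpr h0
      rw [← hord r hr r₀ hr₀] at h
      exact (ord_eq_zero_iff p hp r).mp h
    have hcont : Continuous fun r : Fin j → ℝ => MvPolynomial.eval r p :=
      MvPolynomial.continuous_eval p
    have himg : IsPreconnected ((fun r => MvPolynomial.eval r p) '' S) :=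
      (hS.isPreconnected).image _ hcont.continuousOn
    have hoc : Set.OrdConnected ((fun r => MvPolynomial.eval r p) '' S) :=
      himg.ordConnected
    have h0img : (0 : ℝ) ∉ (fun r => MvPolynomial.eval r p) '' S := by
      rintro ⟨r, hr, hr0⟩
      exact hallne r hr hr0
    rcases lt_or_gt_of_ne h0 with hneg | hpos
    · refine Or.inl fun r hr => ?_
      by_contra hnlt
      push_neg at hnlt
      have hrpos : 0 < MvPolynomial.eval r p := lt_of_le_of_ne hnlt (Ne.symm (hallne r hr))
      exact h0img (hoc.out ⟨r₀, hr₀, rfl⟩ ⟨r, hr, rfl⟩ ⟨le_of_lt hneg, le_of_lt hrpos⟩)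
    · refine Or.inr (Or.inr fun r hr => ?_)
      by_contra hnlt
      push_neg at hnlt
      have hrneg : MvPolynomial.eval r p < 0 := lt_of_le_of_ne hnlt (hallne r hr)
      exact h0img (hoc.out ⟨r, hr, rfl⟩ ⟨r₀, hr₀, rfl⟩ ⟨le_of_lt hrneg, le_of_lt hpos⟩)
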